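/- Let G be an amply regular graph with parameters (n, d, α, β) with α = 1 and β > 1. Then for every edge xy, the Lin-Lu-Yau curvature satisfies κ(x, y) = 3/d. -/

import Mathlib

open Finset SimpleGraph

variable {V : Type*} [Fintype V] [DecidableEq V]

/-- A graph is amply regular with parameters `(n, d, a, b)` if it is `d`-regular on `n`
vertices, adjacent vertices have exactly `a` common neighbors, and vertices at distance 2
have exactly `b` common neighbors. -/
def SimpleGraph.IsAmplyRegular (G : SimpleGraph V) [DecidableRel G.Adj]
    (n d a b : ℕ) : Prop :=
  Fintype.card V = n ∧ G.IsRegularOfDegree d ∧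
    (∀ x y, G.Adj x y → (G.neighborFinset x ∩ G.neighborFinset y).card = a) ∧
    (∀ x y, G.dist x y = 2 → (G.neighborFinset x ∩ G.neighborFinset y).card = b)

/-- The measure `μ_x^p` giving mass `p` to `x` and `(1-p)/deg x` to each neighbor of `x`. -/
noncomputable def muMeasure (G : SimpleGraph V) [DecidableRel G.Adj] (p : ℝ) (x : V) :
    V → ℝ :=
  fun v => if v = x then p else if G.Adj x v then (1 - p) / (G.degree x : ℝ) else 0

/-- `pi` is a transport plan between `mu1` and `mu2`. -/
def IsTransportPlan (mu1 mu2 : V → ℝ) (pi : V → V → ℝ) : Prop :=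
  (∀ u v, 0 ≤ pi u v) ∧ (∀ u, ∑ v, pi u v = mu1 u) ∧ (∀ v, ∑ u, pi u v = mu2 v)

/-- The 1-Wasserstein distance between two measures w.r.t. the graph distance. -/
noncomputable def W1 (G : SimpleGraph V) (mu1 mu2 : V → ℝ) : ℝ :=
  sInf {c : ℝ | ∃ pi, IsTransportPlan mu1 mu2 pi ∧
    c = ∑ u, ∑ v, (G.dist u v : ℝ) * pi u v}

/-- The Lin-Lu-Yau curvature of an edge of a `d`-regular graph, via the idleness
`p = 1/(d+1)` formula of Bourne et al. -/
noncomputable def kappaLLY (G : SimpleGraph V) [DecidableRel G.Adj] (d : ℕ) (x y : V) :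
    ℝ :=
  ((d + 1 : ℝ) / d) *
    (1 - W1 G (muMeasure G (1 / (d + 1 : ℝ)) x) (muMeasure G (1 / (d + 1 : ℝ)) y))

/-- `N_x = Γ(x) \ ({y} ∪ Γ(y))`. -/
def Nset (G : SimpleGraph V) [DecidableRel G.Adj] (x y : V) : Finset V :=
  G.neighborFinset x \ insert y (G.neighborFinset y)

/-- `Δ_{xy} = Γ(x) ∩ Γ(y)`. -/
def Dset (G : SimpleGraph V) [DecidableRel G.Adj] (x y : V) : Finset V :=
  G.neighborFinset x ∩ G.neighborFinset y

set_option maxHeartbeats 1000000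

lemma mem_Nset (G : SimpleGraph V) [DecidableRel G.Adj] (x y w : V) :
    w ∈ Nset G x y ↔ G.Adj x w ∧ w ≠ y ∧ ¬ G.Adj y w := by
  simp [Nset, not_or]

lemma key_card (G : SimpleGraph V) [DecidableRel G.Adj] {b : ℕ}
    (hα : ∀ x y, G.Adj x y → (G.neighborFinset x ∩ G.neighborFinset y).card = 1)
    (hβ : ∀ x y, G.dist x y = 2 → (G.neighborFinset x ∩ G.neighborFinset y).card = b)
    {x y z : V} (hxy : G.Adj x y)
    (hz : G.neighborFinset x ∩ G.neighborFinset y = {z})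
    {u : V} (hu : u ∈ Nset G x y) :
    (G.neighborFinset u ∩ Nset G y x).card + 1 = b := by
  rw [mem_Nset] at hu
  obtain ⟨hux, huy, hunadj⟩ := hu
  have hzmem : z ∈ G.neighborFinset x ∩ G.neighborFinset y := by
    rw [hz]; exact mem_singleton_self z
  rw [mem_inter, mem_neighborFinset, mem_neighborFinset] at hzmem
  obtain ⟨hzx, hzy⟩ := hzmem
  have hzu : ¬ G.Adj z u := by
    intro hcon
    have h1 : (G.neighborFinset x ∩ G.neighborFinset z).card ≤ 1 :=
      le_of_eq (hα x z hzx)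
    have hy : y ∈ G.neighborFinset x ∩ G.neighborFinset z := by
      rw [mem_inter, mem_neighborFinset, mem_neighborFinset]
      exact ⟨hxy, hzy.symm⟩
    have hu' : u ∈ G.neighborFinset x ∩ G.neighborFinset z := by
      rw [mem_inter, mem_neighborFinset, mem_neighborFinset]
      exact ⟨hux, hcon⟩
    exact huy (Finset.card_le_one.mp h1 u hu' y hy)
  have hdist : G.dist u y = 2 := by
    have hle : G.dist u y ≤ 2 := by
      simpa using G.dist_le (Walk.cons hux.symm (Walk.cons hxy Walk.nil))
    have hr : G.Reachable u y := ⟨Walk.cons hux.symm (Walk.cons hxy Walk.nil)⟩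
    have h0 : 0 < G.dist u y := hr.pos_dist_of_ne huy
    have h1 : G.dist u y ≠ 1 := fun hcon => hunadj ((SimpleGraph.dist_eq_one_iff_adj.mp hcon).symm)
    omega
  have hbc := hβ u y hdist
  have hset : G.neighborFinset u ∩ G.neighborFinset y
      = insert x (G.neighborFinset u ∩ Nset G y x) := by
    ext v
    simp only [mem_inter, mem_insert, mem_neighborFinset, mem_Nset]
    constructor
    · rintro ⟨huv, hyv⟩
      by_cases hvx : v = x
      · exact Or.inl hvx
      · refine Or.inr ⟨huv, hyv, hvx, ?_⟩
        intro hxv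
        have hvz : v = z := by
          have : v ∈ G.neighborFinset x ∩ G.neighborFinset y := by
            rw [mem_inter, mem_neighborFinset, mem_neighborFinset]; exact ⟨hxv, hyv⟩
          rwa [hz, mem_singleton] at this
        exact hzu (hvz ▸ huv.symm)
    · rintro (rfl | ⟨huv, hyv, -, -⟩)
      · exact ⟨hux.symm, hxy.symm⟩
      · exact ⟨huv, hyv⟩
  have hxnm : x ∉ G.neighborFinset u ∩ Nset G y x := by
    simp [mem_Nset]
  rw [hset, card_insert_of_notMem hxnm] at hbc
  exact hbc

lemma nbhd_decomp (G : SimpleGraph V) [DecidableRel G.Adj]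
    {x y z : V} (hxy : G.Adj x y)
    (hz : G.neighborFinset x ∩ G.neighborFinset y = {z}) :
    G.neighborFinset x = insert y (insert z (Nset G x y)) := by
  have hzmem : z ∈ G.neighborFinset x ∩ G.neighborFinset y := by
    rw [hz]; exact mem_singleton_self z
  rw [mem_inter, mem_neighborFinset, mem_neighborFinset] at hzmem
  obtain ⟨hzx, hzy⟩ := hzmem
  ext v
  simp only [mem_insert, mem_neighborFinset, mem_Nset]
  constructor
  · intro hv
    by_cases h1 : v = y
    · exact Or.inl h1
    by_cases h2 : G.Adj y v
    · refine Or.inr (Or.inl ?_)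
      have : v ∈ G.neighborFinset x ∩ G.neighborFinset y := by
        rw [mem_inter, mem_neighborFinset, mem_neighborFinset]; exact ⟨hv, h2⟩
      rwa [hz, mem_singleton] at this
    · exact Or.inr (Or.inr ⟨hv, h1, h2⟩)
  · rintro (rfl | rfl | ⟨h, -, -⟩)
    · exact hxy
    · exact hzx
    · exact h

/-- In an amply regular graph with `α = 1 < β`, every edge has Lin-Lu-Yau curvature
`3/d`. -/
theorem stmt5 (G : SimpleGraph V) [DecidableRel G.Adj] {n d a b : ℕ}
    (h : G.IsAmplyRegular n d a b) (ha : a = 1) (hb : 1 < b)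
    (x y : V) (hxy : G.Adj x y) :
    kappaLLY G d x y = 3 / d := by
  obtain ⟨-, hreg, hα, hβ⟩ := h
  subst ha
  obtain ⟨z, hz⟩ := Finset.card_eq_one.mp (hα x y hxy)
  have hzmem : z ∈ G.neighborFinset x ∩ G.neighborFinset y := by
    rw [hz]; exact mem_singleton_self z
  rw [mem_inter, mem_neighborFinset, mem_neighborFinset] at hzmem
  obtain ⟨hzx, hzy⟩ := hzmem
  have hz' : G.neighborFinset y ∩ G.neighborFinset x = {z} := by
    rwa [inter_comm]
  -- cardinalities
  have hznx : z ∉ Nset G x y := by rw [mem_Nset]; tauto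
  have hzny : z ∉ Nset G y x := by rw [mem_Nset]; tauto
  have hNx2 : (Nset G x y).card + 2 = d := by
    have hdeg : (G.neighborFinset x).card = d := by
      rw [card_neighborFinset_eq_degree]; exact hreg x
    rw [nbhd_decomp G hxy hz] at hdeg
    have hynm : y ∉ insert z (Nset G x y) := by
      rw [mem_insert, mem_Nset]
      rintro (rfl | ⟨-, hc, -⟩)
      · exact G.irrefl hzy
      · exact hc rfl
    rw [card_insert_of_notMem hynm, card_insert_of_notMem hznx] at hdeg
    omega
  have hNy2 : (Nset G y x).card + 2 = d := by
    have hdeg : (G.neighborFinset y).card = d := by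
      rw [card_neighborFinset_eq_degree]; exact hreg y
    rw [nbhd_decomp G hxy.symm hz'] at hdeg
    have hxnm : x ∉ insert z (Nset G y x) := by
      rw [mem_insert, mem_Nset]
      rintro (rfl | ⟨-, hc, -⟩)
      · exact G.irrefl hzx
      · exact hc rfl
    rw [card_insert_of_notMem hxnm, card_insert_of_notMem hzny] at hdeg
    omega
  have hd2 : 2 ≤ d := by omega
  have hd0 : (0:ℝ) < (d:ℝ) := by
    have : (2:ℝ) ≤ (d:ℝ) := by exact_mod_cast hd2
    linarith
  have hd1 : (0:ℝ) < (d:ℝ) + 1 := by linarith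
  set q : ℝ := 1 / ((d:ℝ) + 1) with hq
  have hq0 : 0 ≤ q := by positivity
  set μx := muMeasure G (1/((d:ℝ)+1)) x with hμxdef
  set μy := muMeasure G (1/((d:ℝ)+1)) y with hμydef
  have hmuval : ∀ w v : V, muMeasure G (1/((d:ℝ)+1)) w v
      = if v ∈ insert w (G.neighborFinset w) then q else 0 := by
    intro w v
    simp only [muMeasure, mem_insert, mem_neighborFinset]
    by_cases h1 : v = w
    · subst h1
      simp [G.irrefl, hq]
    · by_cases h2 : G.Adj w v
      · rw [if_neg h1, if_pos h2, hreg w, if_pos (Or.inr h2), hq]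
        field_simp
        ring
      · rw [if_neg h1, if_neg h2, if_neg (by push_neg; exact ⟨h1, h2⟩)]
  have hmux : ∀ v, μx v = if v ∈ insert x (G.neighborFinset x) then q else 0 :=
    fun v => hmuval x v
  have hmuy : ∀ v, μy v = if v ∈ insert y (G.neighborFinset y) then q else 0 :=
    fun v => hmuval y v
  -- Hall's condition and matching
  have hkey2 : ∀ v ∈ Nset G y x, (G.neighborFinset v ∩ Nset G x y).card + 1 = b :=
    fun v hv => key_card G hα hβ hxy.symm hz' hv
  have hall : ∀ s : Finset {u // u ∈ Nset G x y},
      s.card ≤ (s.biUnion (fun u => G.neighborFinset u.1 ∩ Nset G y x)).card := by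
    intro s
    set t := fun u : {u // u ∈ Nset G x y} => G.neighborFinset u.1 ∩ Nset G y x with ht
    set B := s.biUnion t with hB
    have hBsub : ∀ w ∈ B, w ∈ Nset G y x := by
      intro w hw
      rw [hB, Finset.mem_biUnion] at hw
      obtain ⟨u, -, hw⟩ := hw
      exact (Finset.mem_inter.mp hw).2
    have h1 : ∑ u ∈ s, (t u).card = s.card * (b - 1) := by
      rw [Finset.sum_congr rfl (fun u _ => ?_), Finset.sum_const, smul_eq_mul]
      have := key_card G hα hβ hxy hz u.2
      simp only [ht]
      omega
    have h2 : ∑ u ∈ s, (t u).card ≤ B.card * (b - 1) := by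
      have step1 : ∀ u ∈ s, (t u).card = ∑ w ∈ B, (if w ∈ t u then 1 else 0) := by
        intro u hu
        rw [← Finset.card_filter, Finset.filter_mem_eq_inter,
          Finset.inter_eq_right.mpr (Finset.subset_biUnion_of_mem t hu)]
      rw [Finset.sum_congr rfl step1, Finset.sum_comm]
      have step2 : ∀ w ∈ B, ∑ u ∈ s, (if w ∈ t u then 1 else 0) ≤ b - 1 := by
        intro w hw
        rw [← Finset.card_filter]
        have hle : (s.filter (fun u => w ∈ t u)).card
            ≤ (G.neighborFinset w ∩ Nset G x y).card := by
          apply Finset.card_le_card_of_injOn (fun u => u.1)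
          · intro u hu
            rw [Finset.mem_coe, Finset.mem_filter, ht] at hu
            obtain ⟨-, hu2⟩ := hu
            rw [Finset.mem_coe]
            rw [Finset.mem_inter, mem_neighborFinset] at hu2 ⊢
            exact ⟨hu2.1.symm, u.2⟩
          · intro u _ v _ he
            exact Subtype.ext he
        have := hkey2 w (hBsub w hw)
        omega
      calc ∑ w ∈ B, ∑ u ∈ s, (if w ∈ t u then 1 else 0)
          ≤ ∑ w ∈ B, (b - 1) := Finset.sum_le_sum step2
        _ = B.card * (b - 1) := by rw [Finset.sum_const, smul_eq_mul]
    have hb1 : 0 < b - 1 := by omega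
    have := h1 ▸ h2
    exact Nat.le_of_mul_le_mul_right (by omega) hb1
  obtain ⟨f, finj, hf⟩ := (Finset.all_card_le_biUnion_card_iff_exists_injective
    (fun u : {u // u ∈ Nset G x y} => G.neighborFinset u.1 ∩ Nset G y x)).mp hall
  set m : V → V := fun u => if h : u ∈ Nset G x y then f ⟨u, h⟩ else u with hm
  have hmadj : ∀ u (hu : u ∈ Nset G x y), G.Adj u (m u) ∧ m u ∈ Nset G y x := by
    intro u hu
    have := hf ⟨u, hu⟩
    rw [Finset.mem_inter, mem_neighborFinset] at this
    simp only [hm, dif_pos hu]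
    exact this
  have hminjOn : ∀ u ∈ Nset G x y, ∀ v ∈ Nset G x y, m u = m v → u = v := by
    intro u hu v hv he
    simp only [hm, dif_pos hu, dif_pos hv] at he
    have := finj he
    exact congrArg Subtype.val this
  have hmimg : (Nset G x y).image m = Nset G y x := by
    apply Finset.eq_of_subset_of_card_le
    · intro w hw
      rw [Finset.mem_image] at hw
      obtain ⟨u, hu, rfl⟩ := hw
      exact (hmadj u hu).2
    · rw [Finset.card_image_of_injOn hminjOn]
      omega
  set S : Finset V := {x, y, z} with hS
  have hNxS : ∀ w ∈ Nset G x y, w ∉ S := by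
    intro w hw
    rw [mem_Nset] at hw
    obtain ⟨h1, h2, h3⟩ := hw
    simp only [hS, mem_insert, mem_singleton]
    push_neg
    exact ⟨fun hwx => G.irrefl (hwx ▸ h1), h2, fun hwz => h3 (hwz ▸ hzy)⟩
  have hNyS : ∀ w ∈ Nset G y x, w ∉ S := by
    intro w hw
    rw [mem_Nset] at hw
    obtain ⟨h1, h2, h3⟩ := hw
    simp only [hS, mem_insert, mem_singleton]
    push_neg
    exact ⟨h2, fun hwy => G.irrefl (hwy ▸ h1), fun hwz => h3 (hwz ▸ hzx)⟩
  have hBx : insert x (G.neighborFinset x) = S ∪ Nset G x y := by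
    rw [nbhd_decomp G hxy hz, hS]
    ext v
    simp only [mem_insert, mem_union, mem_singleton]
    tauto
  have hBy : insert y (G.neighborFinset y) = S ∪ Nset G y x := by
    rw [nbhd_decomp G hxy.symm hz', hS]
    ext v
    simp only [mem_insert, mem_union, mem_singleton]
    tauto
  set π : V → V → ℝ := fun u v =>
    (if u ∈ S ∧ v = u then q else 0) + (if u ∈ Nset G x y ∧ v = m u then q else 0)
    with hπ
  have hrowsum : ∀ u, ∑ v, π u v = μx u := by
    intro u
    rw [hmux u, hBx]
    simp only [hπ]
    rw [Finset.sum_add_distrib]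
    have e1 : ∑ v, (if u ∈ S ∧ v = u then q else 0) = if u ∈ S then q else 0 := by
      by_cases hu : u ∈ S <;> simp [hu]
    have e2 : ∑ v, (if u ∈ Nset G x y ∧ v = m u then q else 0)
        = if u ∈ Nset G x y then q else 0 := by
      by_cases hu : u ∈ Nset G x y <;> simp [hu]
    rw [e1, e2]
    by_cases hu1 : u ∈ S
    · rw [if_pos hu1, if_neg (fun hc => hNxS u hc hu1), if_pos (mem_union_left _ hu1)]
      ring
    · by_cases hu2 : u ∈ Nset G x y
      · rw [if_neg hu1, if_pos hu2, if_pos (mem_union_right _ hu2)]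
        ring
      · rw [if_neg hu1, if_neg hu2, if_neg (fun hc => ?_)]
        · ring
        · rcases mem_union.mp hc with h | h
          · exact hu1 h
          · exact hu2 h
  have hcolsum : ∀ v, ∑ u, π u v = μy v := by
    intro v
    rw [hmuy v, hBy]
    simp only [hπ]
    rw [Finset.sum_add_distrib]
    have e1 : ∑ u, (if u ∈ S ∧ v = u then q else 0) = if v ∈ S then q else 0 := by
      rw [Finset.sum_congr rfl (fun u _ => show (if u ∈ S ∧ v = u then q else 0)
        = if u = v then (if v ∈ S then q else 0) else 0 from ?_)]
      · simp
      · by_cases h : u = v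
        · subst h; by_cases h2 : u ∈ S <;> simp [h2]
        · rw [if_neg (fun hc => h hc.2.symm), if_neg h]
    have e2 : ∑ u, (if u ∈ Nset G x y ∧ v = m u then q else 0)
        = if v ∈ Nset G y x then q else 0 := by
      calc ∑ u, (if u ∈ Nset G x y ∧ v = m u then q else 0)
          = ∑ u, (if u ∈ Nset G x y then (if v = m u then q else 0) else 0) := by
            refine Finset.sum_congr rfl fun u _ => ?_
            by_cases h : u ∈ Nset G x y <;> simp [h]
        _ = ∑ u ∈ Nset G x y, (if v = m u then q else 0) := by simp
        _ = ∑ w ∈ (Nset G x y).image m, (if v = w then q else 0) := by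
            rw [Finset.sum_image (fun a ha c hc hac => hminjOn a ha c hc hac)]
        _ = if v ∈ Nset G y x then q else 0 := by
            rw [hmimg, Finset.sum_ite_eq]
    rw [e1, e2]
    by_cases hv1 : v ∈ S
    · rw [if_pos hv1, if_neg (fun hc => hNyS v hc hv1), if_pos (mem_union_left _ hv1)]
      ring
    · by_cases hv2 : v ∈ Nset G y x
      · rw [if_neg hv1, if_pos hv2, if_pos (mem_union_right _ hv2)]
        ring
      · rw [if_neg hv1, if_neg hv2, if_neg (fun hc => ?_)]
        · ring
        · rcases mem_union.mp hc with h | h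
          · exact hv1 h
          · exact hv2 h
  have hNxcardR : ((Nset G x y).card : ℝ) = (d:ℝ) - 2 := by
    have : (Nset G x y).card = d - 2 := by omega
    rw [this]
    push_cast [Nat.cast_sub hd2]
    ring
  have hplancost : (((d:ℝ) - 2) / ((d:ℝ) + 1)) ∈ {c : ℝ | ∃ pi, IsTransportPlan μx μy pi ∧
      c = ∑ u, ∑ v, (G.dist u v : ℝ) * pi u v} := by
    refine ⟨π, ⟨fun u v => ?_, hrowsum, hcolsum⟩, ?_⟩
    · simp only [hπ]
      refine add_nonneg ?_ ?_ <;> split_ifs <;> simp [hq0]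
    · have hterm : ∀ u v, (G.dist u v : ℝ) * π u v
          = (if u ∈ Nset G x y ∧ v = m u then (G.dist u (m u) : ℝ) * q else 0) := by
        intro u v
        simp only [hπ, mul_add]
        have p1 : (G.dist u v : ℝ) * (if u ∈ S ∧ v = u then q else 0) = 0 := by
          split_ifs with h
          · rw [h.2]; simp
          · ring
        have p2 : (G.dist u v : ℝ) * (if u ∈ Nset G x y ∧ v = m u then q else 0)
            = (if u ∈ Nset G x y ∧ v = m u then (G.dist u (m u) : ℝ) * q else 0) := by
          split_ifs with h
          · rw [h.2]
          · ring
        rw [p1, p2, zero_add]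
      calc ((d:ℝ) - 2) / ((d:ℝ) + 1)
          = ∑ u ∈ Nset G x y, q := by
            rw [Finset.sum_const, nsmul_eq_mul, hNxcardR, hq]
            field_simp
        _ = ∑ u ∈ Nset G x y, (G.dist u (m u) : ℝ) * q := by
            refine Finset.sum_congr rfl fun u hu => ?_
            rw [SimpleGraph.dist_eq_one_iff_adj.mpr (hmadj u hu).1]
            push_cast
            ring
        _ = ∑ u, (if u ∈ Nset G x y then (G.dist u (m u) : ℝ) * q else 0) := by simp
        _ = ∑ u, ∑ v, (G.dist u v : ℝ) * π u v := by
            refine Finset.sum_congr rfl fun u _ => ?_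
            rw [Finset.sum_congr rfl (fun v _ => hterm u v)]
            by_cases hu : u ∈ Nset G x y <;> simp [hu]
  have hW1 : W1 G μx μy = ((d:ℝ) - 2) / ((d:ℝ) + 1) := by
    rw [W1]
    apply le_antisymm
    · apply csInf_le ⟨0, ?_⟩ hplancost
      rintro c ⟨π', ⟨hp1, -, -⟩, rfl⟩
      refine Finset.sum_nonneg fun u _ => Finset.sum_nonneg fun v _ => ?_
      exact mul_nonneg (by positivity) (hp1 u v)
    · apply le_csInf ⟨_, hplancost⟩
      rintro c ⟨π', ⟨hp1, hp2, hp3⟩, rfl⟩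
      have hπle : ∀ u v, π' u v ≤ μy v := fun u v => by
        rw [← hp3 v]
        exact Finset.single_le_sum (fun w _ => hp1 w v) (mem_univ u)
      have hstep : ∀ u ∈ Nset G x y, q ≤ ∑ v, (G.dist u v : ℝ) * π' u v := by
        intro u hu
        have hu' := (mem_Nset G x y u).mp hu
        have hrowu : ∑ v, π' u v = q := by
          rw [hp2, hmux, if_pos (mem_insert_of_mem ((mem_neighborFinset G x u).mpr hu'.1))]
        rw [← hrowu]
        refine Finset.sum_le_sum fun v _ => ?_
        by_cases h0 : π' u v = 0
        · simp [h0]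
        · have hμy0 : μy v ≠ 0 := fun hc =>
            h0 (le_antisymm (hc ▸ hπle u v) (hp1 u v))
          have hvB : v = y ∨ G.Adj y v := by
            by_contra hc
            push_neg at hc
            apply hμy0
            rw [hmuy, if_neg]
            simp only [mem_insert, mem_neighborFinset]
            push_neg
            exact hc
          have hne : u ≠ v := by
            rintro rfl
            rcases hvB with rfl | hadj
            · exact hu'.2.1 rfl
            · exact hu'.2.2 hadj
          have hreach : G.Reachable u v := by
            have r1 : G.Reachable u y := ⟨Walk.cons hu'.1.symm (Walk.cons hxy Walk.nil)⟩
            rcases hvB with rfl | hadj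
            · exact r1
            · exact r1.trans hadj.reachable
          have h1 : 1 ≤ G.dist u v := hreach.pos_dist_of_ne hne
          have h1' : (1:ℝ) ≤ (G.dist u v : ℝ) := by exact_mod_cast h1
          nlinarith [hp1 u v]
      calc ((d:ℝ) - 2) / ((d:ℝ) + 1) = ∑ u ∈ Nset G x y, q := by
            rw [Finset.sum_const, nsmul_eq_mul, hNxcardR, hq]
            field_simp
        _ ≤ ∑ u ∈ Nset G x y, ∑ v, (G.dist u v : ℝ) * π' u v :=
            Finset.sum_le_sum hstep
        _ ≤ ∑ u, ∑ v, (G.dist u v : ℝ) * π' u v :=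
            Finset.sum_le_sum_of_subset_of_nonneg (Finset.subset_univ _)
              (fun u _ _ => Finset.sum_nonneg fun v _ =>
                mul_nonneg (by positivity) (hp1 u v))
  have hkap : kappaLLY G d x y = ((d:ℝ) + 1) / d * (1 - W1 G μx μy) := by
    rw [kappaLLY]
  rw [hkap, hW1]
  have hdne : (d:ℝ) ≠ 0 := ne_of_gt hd0
  have hd1ne : (d:ℝ) + 1 ≠ 0 := ne_of_gt hd1
  field_simp
  ring
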